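/- Let T > 0, σ > 0, μ > ρ, and B(T) ~ N(0,T). For measurable f : ℝ → [0,1], define M̄(f) = exp(ρT)(1 − E[f(B(T))]) + exp((μ − σ²/2)T)·E[f(B(T) − σT) exp(σB(T))]. Then M̄(f) = exp(ρT) + (exp(μT) − exp(ρT))·E[f(B(T))]. -/

import Mathlib

open MeasureTheory ProbabilityTheory
open scoped NNReal ENNReal

lemma gauss_integral_eq_volume (m : ℝ) {v : ℝ≥0} (hv : v ≠ 0) (g : ℝ → ℝ) :
    ∫ x, g x ∂(gaussianReal m v) = ∫ x, gaussianPDFReal m v x * g x := by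
  rw [gaussianReal_of_var_ne_zero _ hv]
  have : (gaussianPDF m v) = fun x => ((Real.toNNReal (gaussianPDFReal m v x) : ℝ≥0) : ℝ≥0∞) := by
    ext x; simp [gaussianPDF, ENNReal.ofReal]
  rw [this, integral_withDensity_eq_integral_smul
    ((measurable_gaussianPDFReal m v).real_toNNReal)]
  congr 1
  ext x
  simp [NNReal.smul_def, Real.coe_toNNReal _ (gaussianPDFReal_nonneg m v x)]

lemma girsanov (T σ : ℝ) (hT : 0 < T) (f : ℝ → ℝ) (hf : Measurable f) :
    ∫ x, f (x - σ * T) * Real.exp (σ * x) ∂(gaussianReal 0 ⟨T, hT.le⟩) =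
      Real.exp (σ ^ 2 * T / 2) * ∫ x, f x ∂(gaussianReal 0 ⟨T, hT.le⟩) := by
  have hv : (⟨T, hT.le⟩ : ℝ≥0) ≠ 0 := by
    simp [← NNReal.coe_ne_zero, hT.ne']
  have step1 : ∫ x, f (x - σ * T) * Real.exp (σ * x) ∂(gaussianReal 0 ⟨T, hT.le⟩)
      = ∫ x, f (x - σ * T) * Real.exp (σ ^ 2 * T / 2) ∂(gaussianReal (σ * T) ⟨T, hT.le⟩) := by
    rw [gauss_integral_eq_volume 0 hv, gauss_integral_eq_volume (σ * T) hv]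
    congr 1
    ext x
    simp only [gaussianPDFReal, NNReal.coe_mk, sub_zero]
    have hexp : Real.exp (-x ^ 2 / (2 * T)) * Real.exp (σ * x)
        = Real.exp (-(x - σ * T) ^ 2 / (2 * T)) * Real.exp (σ ^ 2 * T / 2) := by
      rw [← Real.exp_add, ← Real.exp_add]
      congr 1
      have hT' : (T : ℝ) ≠ 0 := hT.ne'
      field_simp
      ring
    change (Real.sqrt (2 * Real.pi * T))⁻¹ * Real.exp (-x ^ 2 / (2 * T)) * (f (x - σ * T) * Real.exp (σ * x)) =
      (Real.sqrt (2 * Real.pi * T))⁻¹ * Real.exp (-(x - σ * T) ^ 2 / (2 * T)) * (f (x - σ * T) * Real.exp (σ ^ 2 * T / 2))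
    linear_combination ((Real.sqrt (2 * Real.pi * T))⁻¹ * f (x - σ * T)) * hexp
  have step2 : ∫ x, f (x - σ * T) ∂(gaussianReal (σ * T) ⟨T, hT.le⟩)
      = ∫ x, f x ∂(gaussianReal 0 ⟨T, hT.le⟩) := by
    have hmap : (gaussianReal 0 ⟨T, hT.le⟩).map (· + σ * T) = gaussianReal (0 + σ * T) ⟨T, hT.le⟩ :=
      gaussianReal_map_add_const (σ * T)
    rw [zero_add] at hmap
    rw [← hmap, integral_map (by fun_prop) (by
      apply Measurable.aestronglyMeasurable; fun_prop)]
    simp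
  calc ∫ x, f (x - σ * T) * Real.exp (σ * x) ∂(gaussianReal 0 ⟨T, hT.le⟩)
      = ∫ x, f (x - σ * T) * Real.exp (σ ^ 2 * T / 2) ∂(gaussianReal (σ * T) ⟨T, hT.le⟩) := step1
    _ = Real.exp (σ ^ 2 * T / 2) * ∫ x, f (x - σ * T) ∂(gaussianReal (σ * T) ⟨T, hT.le⟩) := by
        rw [integral_mul_const, mul_comm]
    _ = Real.exp (σ ^ 2 * T / 2) * ∫ x, f x ∂(gaussianReal 0 ⟨T, hT.le⟩) := by rw [step2]

theorem stmt_6 (T σ ρ μ : ℝ) (hT : 0 < T) (hσ : 0 < σ) (hρμ : ρ < μ)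
    (f : ℝ → ℝ) (hf : Measurable f) (hf0 : ∀ x, 0 ≤ f x) (hf1 : ∀ x, f x ≤ 1) :
    Real.exp (ρ * T) * (1 - ∫ x, f x ∂(gaussianReal 0 ⟨T, hT.le⟩)) +
      Real.exp ((μ - σ ^ 2 / 2) * T) *
        ∫ x, f (x - σ * T) * Real.exp (σ * x) ∂(gaussianReal 0 ⟨T, hT.le⟩) =
    Real.exp (ρ * T) +
      (Real.exp (μ * T) - Real.exp (ρ * T)) * ∫ x, f x ∂(gaussianReal 0 ⟨T, hT.le⟩) := by
  rw [girsanov T σ hT f hf]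
  rw [← mul_assoc, ← Real.exp_add]
  ring_nf
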